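/- Let d be a C₀-translation invariant and (C₁,C₂,C₃)-Lipschitz multiplicative metric on a real vector space E, and let δ₀(x,y) = lim_{n→∞} d(nx, ny)/n. Then the set E₀ = {x ∈ E : δ₀(x,0) = 0} is a linear subspace of E. -/
import Mathlib


theorem stmt7 {E : Type*} [AddCommGroup E] [Module ℝ E] (d : E → E → ℝ)
    (C₀ C₁ C₂ C₃ : ℝ) (hC₀ : 0 ≤ C₀) (hC₁ : 1 ≤ C₁) (hC₂ : 0 ≤ C₂) (hC₃ : 0 ≤ C₃)
    (hnonneg : ∀ x y, 0 ≤ d x y)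
    (hsymm : ∀ x y, d x y = d y x)
    (htri : ∀ x y z, d x z ≤ d x y + d y z)
    (htrans : ∀ x y z, d (x + z) (y + z) ≤ d x y + C₀)
    (hmul : ∀ (l : ℝ) (x y : E),
      C₁⁻¹ * |l| * d x y - C₂ * |l| - C₃ ≤ d (l • x) (l • y) ∧
      d (l • x) (l • y) ≤ C₁ * |l| * d x y + C₂ * |l| + C₃)
    (δ₀ : E → E → ℝ)
    (hδ₀ : ∀ x y, Filter.Tendsto (fun n : ℕ => d (n • x) (n • y) / n) Filter.atTop (nhds (δ₀ x y))) :
    ∃ S : Submodule ℝ E, (S : Set E) = {x : E | δ₀ x 0 = 0} := by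
  have hδ' : ∀ x : E, Filter.Tendsto (fun n : ℕ => d (n • x) 0 / n) Filter.atTop (nhds (δ₀ x 0)) := by
    intro x
    simpa using hδ₀ x 0
  have hpos : ∀ x : E, 0 ≤ δ₀ x 0 := fun x =>
    ge_of_tendsto' (hδ' x) (fun n => div_nonneg (hnonneg _ _) (Nat.cast_nonneg n))
  refine ⟨{ carrier := {x | δ₀ x 0 = 0}
            zero_mem' := ?_
            add_mem' := ?_
            smul_mem' := ?_ }, rfl⟩
  · intro x y hx hy
    simp only [Set.mem_setOf_eq] at hx hy ⊢
    have hg : Filter.Tendsto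
        (fun n : ℕ => (d (n • x) 0 / n + C₀ / n) + d (n • y) 0 / n)
        Filter.atTop (nhds ((δ₀ x 0 + 0) + δ₀ y 0)) :=
      ((hδ' x).add (tendsto_const_div_atTop_nhds_zero_nat C₀)).add (hδ' y)
    have hle : δ₀ (x + y) 0 ≤ (δ₀ x 0 + 0) + δ₀ y 0 := by
      refine le_of_tendsto_of_tendsto' (hδ' (x + y)) hg (fun n => ?_)
      have h1 : d (n • (x + y)) 0 ≤ (d (n • x) 0 + C₀) + d (n • y) 0 := by
        calc d (n • (x + y)) 0 ≤ d (n • x + n • y) (n • y) + d (n • y) 0 := by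
              rw [smul_add]; exact htri _ _ _
          _ ≤ (d (n • x) 0 + C₀) + d (n • y) 0 := by
              have := htrans (n • x) 0 (n • y)
              rw [zero_add] at this
              linarith
      have hn : (0:ℝ) ≤ (n:ℝ) := Nat.cast_nonneg n
      calc d (n • (x + y)) 0 / n ≤ ((d (n • x) 0 + C₀) + d (n • y) 0) / n := by
            gcongr
        _ = (d (n • x) 0 / n + C₀ / n) + d (n • y) 0 / n := by rw [add_div, add_div]
    have := hpos (x + y)
    rw [hx, hy] at hle
    linarith
  · have h1 : Filter.Tendsto (fun n : ℕ => d ((n : ℕ) • (0:E)) 0 / n) Filter.atTop (nhds 0) := by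
      simp only [smul_zero]
      exact tendsto_const_div_atTop_nhds_zero_nat _
    exact tendsto_nhds_unique (hδ' 0) h1
  · intro c x hx
    simp only [Set.mem_setOf_eq] at hx ⊢
    have hg : Filter.Tendsto
        (fun n : ℕ => C₁ * |c| * (d (n • x) 0 / n) + (C₂ * |c| + C₃) / n)
        Filter.atTop (nhds (C₁ * |c| * δ₀ x 0 + 0)) :=
      (((hδ' x).const_mul _).add (tendsto_const_div_atTop_nhds_zero_nat _))
    have hle : δ₀ (c • x) 0 ≤ C₁ * |c| * δ₀ x 0 + 0 := by
      refine le_of_tendsto_of_tendsto' (hδ' (c • x)) hg (fun n => ?_)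
      have h1 : d (n • (c • x)) 0 ≤ C₁ * |c| * d (n • x) 0 + (C₂ * |c| + C₃) := by
        have h2 := (hmul c (n • x) 0).2
        rw [smul_zero] at h2
        rw [smul_comm]
        linarith
      have hn : (0:ℝ) ≤ (n:ℝ) := Nat.cast_nonneg n
      calc d (n • (c • x)) 0 / n ≤ (C₁ * |c| * d (n • x) 0 + (C₂ * |c| + C₃)) / n := by gcongr
        _ = C₁ * |c| * (d (n • x) 0 / n) + (C₂ * |c| + C₃) / n := by
            rw [add_div, mul_div_assoc]
    have := hpos (c • x)
    rw [hx] at hle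
    linarith
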